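/- Let G be a group, A a finite alphabet closed under a formal inversion and mapping onto a semigroup generating set of G, and L ⊆ A* a regular language such that the evaluation map π : L → G is finite-to-one and onto. If there exists a constant k such that for all w₁, w₂ ∈ L and all a, b ∈ A ∪ {ε} with π(aw₁b) = π(w₂) one has D(aw₁b, w₂) ≤ k, then (A, L) is a biautomatic structure, i.e. both (A, L) and (A, L⁻¹) are automatic structures. -/

import Mathlib

/-- The evaluation of a word over the alphabet `A` in the group `G`, via the letter map `φ`;
this is the monoid homomorphism `π : A* → G`. -/
def evalWord {A G : Type*} [Group G] (φ : A → G) (w : List A) : G := (w.map φ).prod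

/-- The word metric on `G` relative to the letter map `φ : A → G`:
`d(g,h)` is the least length of a word `u` with `π(u) = g⁻¹h`. -/
noncomputable def wordDist {A G : Type*} [Group G] (φ : A → G) (g h : G) : ℕ :=
  sInf {n | ∃ u : List A, u.length = n ∧ evalWord φ u = g⁻¹ * h}

/-- The synchronous uniform distance between two words: the maximum over `n` of the
word-metric distance between the values of the length-`n` prefixes. -/
noncomputable def unifDist {A G : Type*} [Group G] (φ : A → G) (w₁ w₂ : List A) : ℕ :=
  sSup {m | ∃ n : ℕ, m = wordDist φ (evalWord φ (w₁.take n)) (evalWord φ (w₂.take n))}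

/-- The formal inverse of a word: reverse it and invert each letter via `ι`. -/
def wordInv {A : Type*} (ι : A → A) (w : List A) : List A := w.reverse.map ι

/-- `(A, L)` is an automatic structure for the group `G` (with letter map `φ`):
`L` is regular, maps onto `G`, and satisfies the one-sided fellow traveller property. -/
def IsAutomaticStructure {A G : Type*} [Group G] (φ : A → G) (L : Language A) : Prop :=
  L.IsRegular ∧ (∀ g : G, ∃ w ∈ L, evalWord φ w = g) ∧
    ∃ k : ℕ, ∀ w₁ ∈ L, ∀ w₂ ∈ L, ∀ a : Option A,
      evalWord φ (w₁ ++ a.toList) = evalWord φ w₂ →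
        unifDist φ (w₁ ++ a.toList) w₂ ≤ k

/-- `(A, L)` is a biautomatic structure: both `(A, L)` and `(A, L⁻¹)` are automatic. -/
def IsBiautomaticStructure {A G : Type*} [Group G] (φ : A → G) (ι : A → A)
    (L : Language A) : Prop :=
  IsAutomaticStructure φ L ∧
    IsAutomaticStructure φ ((wordInv ι '' (L : Set (List A)) : Set (List A)) : Language A)

section Aux
variable {A G : Type*} [Group G] (φ : A → G)

lemma evalWord_append (u v : List A) :
    evalWord φ (u ++ v) = evalWord φ u * evalWord φ v := by simp [evalWord]

lemma evalWord_take_drop (u : List A) (n : ℕ) :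
    evalWord φ u = evalWord φ (u.take n) * evalWord φ (u.drop n) := by
  rw [← evalWord_append, List.take_append_drop]

lemma evalWord_wordInv (ι : A → A) (hι : ∀ a, φ (ι a) = (φ a)⁻¹) (u : List A) :
    evalWord φ (wordInv ι u) = (evalWord φ u)⁻¹ := by
  induction u with
  | nil => simp [wordInv, evalWord]
  | cons a u ih =>
    have h1 : wordInv ι (a :: u) = wordInv ι u ++ [ι a] := by simp [wordInv]
    rw [h1, evalWord_append, ih]
    simp [evalWord, hι, mul_inv_rev]

lemma wordInv_take (ι : A → A) (u : List A) (n : ℕ) :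
    (wordInv ι u).take n = wordInv ι (u.drop (u.length - n)) := by
  unfold wordInv
  rw [← List.map_take]
  congr 1
  rw [show u.drop (u.length - n) = (u.reverse.take n).reverse by
    rw [List.reverse_take]; simp, List.reverse_reverse]

lemma eval_wordInv_take (ι : A → A) (hι : ∀ a, φ (ι a) = (φ a)⁻¹) (u : List A) (n : ℕ) :
    evalWord φ ((wordInv ι u).take n) = (evalWord φ (u.drop (u.length - n)))⁻¹ := by
  rw [wordInv_take, evalWord_wordInv φ ι hι]

lemma wordDist_exists (hrep : ∀ g : G, ∃ u : List A, evalWord φ u = g) (g h : G) :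
    ∃ u : List A, u.length = wordDist φ g h ∧ evalWord φ u = g⁻¹ * h := by
  obtain ⟨u, hu⟩ := hrep (g⁻¹ * h)
  exact Nat.sInf_mem (⟨u.length, u, rfl, hu⟩ :
    {n | ∃ u : List A, u.length = n ∧ evalWord φ u = g⁻¹ * h}.Nonempty)

lemma wordDist_le (g h : G) (u : List A) (hu : evalWord φ u = g⁻¹ * h) :
    wordDist φ g h ≤ u.length := Nat.sInf_le ⟨u, rfl, hu⟩

lemma unifDist_bddAbove (w₁ w₂ : List A) :
    BddAbove {m | ∃ n : ℕ,
      m = wordDist φ (evalWord φ (w₁.take n)) (evalWord φ (w₂.take n))} := by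
  set M := max w₁.length w₂.length with hM
  set f : ℕ → ℕ := fun n => wordDist φ (evalWord φ (w₁.take n)) (evalWord φ (w₂.take n)) with hf
  refine BddAbove.mono ?_ (Set.Finite.bddAbove ((Set.finite_Iic M).image f))
  rintro m ⟨n, rfl⟩
  refine ⟨min n M, Set.mem_Iic.2 (min_le_right _ _), ?_⟩
  by_cases h : n ≤ M
  · simp [min_eq_left h, hf]
  · push_neg at h
    have h1 : w₁.length ≤ M := le_max_left _ _
    have h2 : w₂.length ≤ M := le_max_right _ _
    rw [min_eq_right h.le, hf]
    simp only []
    rw [List.take_of_length_le h1, List.take_of_length_le h2,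
      List.take_of_length_le (h1.trans h.le), List.take_of_length_le (h2.trans h.le)]

lemma le_unifDist (w₁ w₂ : List A) (n : ℕ) :
    wordDist φ (evalWord φ (w₁.take n)) (evalWord φ (w₂.take n)) ≤ unifDist φ w₁ w₂ :=
  le_csSup (unifDist_bddAbove φ w₁ w₂) ⟨n, rfl⟩

lemma unifDist_le (w₁ w₂ : List A) (K : ℕ)
    (h : ∀ n, wordDist φ (evalWord φ (w₁.take n)) (evalWord φ (w₂.take n)) ≤ K) :
    unifDist φ w₁ w₂ ≤ K :=
  csSup_le ⟨_, 0, rfl⟩ (by rintro m ⟨n, rfl⟩; exact h n)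

end Aux
lemma isRegular_wordInv_image {A : Type*} (ι : A → A) {L : Language A}
    (h : L.IsRegular) :
    Language.IsRegular ((wordInv ι '' (L : Set (List A)) : Set (List A)) : Language A) := by
  classical
  obtain ⟨σ, fσ, M, hM⟩ := h
  haveI := fσ
  let N : NFA A σ := ⟨fun s a => {t | ∃ b, ι b = a ∧ M.step t b = s}, M.accept, {M.start}⟩
  have key : ∀ (w : List A) (S : Set σ) (t : σ),
      t ∈ N.evalFrom S w ↔ ∃ v : List A, wordInv ι v = w ∧ M.evalFrom t v ∈ S := by
    intro w
    induction w with
    | nil =>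
      intro S t
      simp only [NFA.evalFrom_nil]
      constructor
      · intro ht; exact ⟨[], rfl, ht⟩
      · rintro ⟨v, hv, htv⟩
        have : v = [] := by
          have := congrArg List.length hv
          simpa [wordInv] using this
        subst this
        simpa using htv
    | cons a w ih =>
      intro S t
      have h1 : N.evalFrom S (a :: w) = N.evalFrom (N.stepSet S a) w := rfl
      rw [h1, ih]
      constructor
      · rintro ⟨v', hv', hmem⟩
        rw [NFA.mem_stepSet] at hmem
        obtain ⟨s, hsS, b, hb, hstep⟩ := hmem
        refine ⟨v' ++ [b], ?_, ?_⟩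
        · simp [wordInv] at hv' ⊢
          exact ⟨hb, hv'⟩
        · rw [DFA.evalFrom_append_singleton, hstep]; exact hsS
      · rintro ⟨v, hv, hmem⟩
        have hvne : v ≠ [] := by rintro rfl; simp [wordInv] at hv
        obtain ⟨v', b, rfl⟩ : ∃ v' b, v = v' ++ [b] := by
          rcases List.eq_nil_or_concat v with rfl | ⟨v', b, rfl⟩
          · exact absurd rfl hvne
          · exact ⟨v', b, List.concat_eq_append⟩
        refine ⟨v', ?_, ?_⟩
        · simp [wordInv] at hv
          show v'.reverse.map ι = w
          rw [List.map_reverse]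
          exact hv.2
        · rw [NFA.mem_stepSet]
          refine ⟨M.evalFrom t (v' ++ [b]), hmem, b, ?_, ?_⟩
          · simp [wordInv] at hv; exact hv.1
          · rw [DFA.evalFrom_append_singleton]
  refine ⟨Set σ, inferInstance, N.toDFA, ?_⟩
  rw [N.toDFA_correct]
  ext w
  rw [NFA.mem_accepts]
  constructor
  · rintro ⟨s, hs, hmem⟩
    have : s = M.start := hs
    subst this
    rw [show N.start = M.accept from rfl] at hmem
    rw [key] at hmem
    obtain ⟨v, hv, hvacc⟩ := hmem
    exact ⟨v, by rw [← hM]; exact hvacc, hv⟩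
  · rintro ⟨v, hvL, hv⟩
    refine ⟨M.start, rfl, ?_⟩
    rw [show N.start = M.accept from rfl, key]
    exact ⟨v, hv, by rw [← hM] at hvL; exact hvL⟩

lemma length_bound {A G : Type*} [Fintype A] [Group G] (φ : A → G)
    (hrep : ∀ g : G, ∃ u : List A, evalWord φ u = g)
    (L : Language A) (hreg : L.IsRegular)
    (hfin : ∀ g : G, {w : List A | w ∈ L ∧ evalWord φ w = g}.Finite)
    (k : ℕ)
    (hk : ∀ w₁ ∈ L, ∀ w₂ ∈ L, ∀ a b : Option A,
      evalWord φ (a.toList ++ w₁ ++ b.toList) = evalWord φ w₂ →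
        unifDist φ (a.toList ++ w₁ ++ b.toList) w₂ ≤ k) :
    ∃ N : ℕ, 0 < N ∧ ∀ u₁ ∈ L, ∀ u₂ ∈ L, ∀ a : Option A,
      evalWord φ (a.toList ++ u₁) = evalWord φ u₂ → u₂.length ≤ u₁.length + N := by
  classical
  obtain ⟨σ, fσ, M, hM⟩ := hreg
  haveI := fσ
  set C := Fintype.card (σ × (Fin k → Option A)) with hC
  refine ⟨C + 2, by omega, ?_⟩
  intro u₁ h₁ u₂ h₂ a ha
  by_contra hlen
  push_neg at hlen
  -- pointwise fellow traveller
  have hft : ∀ n, wordDist φ (evalWord φ ((a.toList ++ u₁).take n))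
      (evalWord φ (u₂.take n)) ≤ k := by
    intro n
    have h := hk u₁ h₁ u₂ h₂ a none (by simpa using ha)
    rw [show (none : Option A).toList = [] from rfl, List.append_nil] at h
    exact le_trans (le_unifDist φ _ _ n) h
  have hlenA : (a.toList ++ u₁).length ≤ u₁.length + 1 := by
    cases a <;> simp [Option.toList]
  have hbig : ∀ n, u₁.length + 1 ≤ n →
      wordDist φ (evalWord φ u₂) (evalWord φ (u₂.take n)) ≤ k := by
    intro n hn
    have h := hft n
    rwa [List.take_of_length_le (le_trans hlenA hn), ha] at h
  -- witness words
  set V : ℕ → List A := fun n =>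
    (wordDist_exists φ hrep (evalWord φ u₂) (evalWord φ (u₂.take n))).choose with hV
  have hVspec : ∀ n, (V n).length = wordDist φ (evalWord φ u₂) (evalWord φ (u₂.take n)) ∧
      evalWord φ (V n) = (evalWord φ u₂)⁻¹ * evalWord φ (u₂.take n) := fun n =>
    (wordDist_exists φ hrep (evalWord φ u₂) (evalWord φ (u₂.take n))).choose_spec
  have hVlen : ∀ n, u₁.length + 1 ≤ n → (V n).length ≤ k := by
    intro n hn; rw [(hVspec n).1]; exact hbig n hn
  -- the contradiction kernel
  have main : ∀ n n' : ℕ, u₁.length + 1 ≤ n → n < n' → n' ≤ u₂.length →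
      M.evalFrom M.start (u₂.take n) = M.evalFrom M.start (u₂.take n') →
      V n = V n' → False := by
    intro n n' hn hlt hn' hstate hVeq
    have hval : evalWord φ (u₂.take n) = evalWord φ (u₂.take n') := by
      have e1 := (hVspec n).2
      have e2 := (hVspec n').2
      rw [hVeq, e2] at e1
      exact (mul_left_cancel e1).symm
    set pre := u₂.take n with hpre
    set seg := (u₂.take n').drop n with hseg
    set rest := u₂.drop n' with hrest
    have hps : pre ++ seg = u₂.take n' := by
      rw [hpre, hseg, show u₂.take n = (u₂.take n').take n by
        rw [List.take_take, min_eq_left hlt.le], List.take_append_drop]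
    have hseglen : seg.length = n' - n := by
      rw [hseg]
      simp only [List.length_drop, List.length_take]
      omega
    have hsegpos : 0 < seg.length := by omega
    have hsegval : evalWord φ seg = 1 := by
      have h := evalWord_append φ pre seg
      rw [hps, ← hval] at h
      exact (mul_left_cancel (a := evalWord φ pre) (by rw [← h, mul_one])).symm
    have hprestate : M.evalFrom M.start (u₂.take n') = M.evalFrom M.start pre := hstate.symm
    have hsegstate : M.evalFrom (M.evalFrom M.start pre) seg = M.evalFrom M.start pre := by
      rw [← DFA.evalFrom_of_append, hps, hprestate]
    have hreststate : M.evalFrom (M.evalFrom M.start pre) rest ∈ M.accept := by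
      have hmem : u₂ ∈ M.accepts := by rw [hM]; exact h₂
      rw [DFA.mem_accepts] at hmem
      have heq : u₂ = (pre ++ seg) ++ rest := by rw [hps, hrest, List.take_append_drop]
      have hmem2 : M.evalFrom M.start ((pre ++ seg) ++ rest) ∈ M.accept := by
        rw [← heq]; exact hmem
      rw [DFA.evalFrom_of_append, DFA.evalFrom_of_append, hsegstate] at hmem2
      exact hmem2
    set W : ℕ → List A := fun i => pre ++ (List.replicate i seg).flatten ++ rest with hW
    have hloopstate : ∀ i, M.evalFrom (M.evalFrom M.start pre)
        ((List.replicate i seg).flatten) = M.evalFrom M.start pre := by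
      intro i
      induction i with
      | zero => simp
      | succ i ih =>
        rw [List.replicate_succ, List.flatten_cons, DFA.evalFrom_of_append, hsegstate, ih]
    have hloopval : ∀ i, evalWord φ ((List.replicate i seg).flatten) = 1 := by
      intro i
      induction i with
      | zero => simp [evalWord]
      | succ i ih =>
        rw [List.replicate_succ, List.flatten_cons, evalWord_append, hsegval, one_mul, ih]
    have hWmem : ∀ i, W i ∈ L := by
      intro i
      rw [← hM]
      rw [DFA.mem_accepts]
      show M.evalFrom M.start (pre ++ (List.replicate i seg).flatten ++ rest) ∈ M.accept
      rw [DFA.evalFrom_of_append, DFA.evalFrom_of_append, hloopstate]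
      exact hreststate
    have hWval : ∀ i, evalWord φ (W i) = evalWord φ u₂ := by
      intro i
      show evalWord φ (pre ++ (List.replicate i seg).flatten ++ rest) = _
      rw [evalWord_append, evalWord_append, hloopval, mul_one, hval, ← evalWord_append,
        hrest, List.take_append_drop]
    have hWinj : Function.Injective W := by
      intro i i' hii
      have h := congrArg List.length hii
      simp only [hW, List.length_append, List.length_flatten, List.map_replicate,
        List.sum_replicate, smul_eq_mul] at h
      have : i * seg.length = i' * seg.length := by omega
      exact Nat.eq_of_mul_eq_mul_right hsegpos this
    exact (hfin (evalWord φ u₂)).not_infinite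
      (Set.infinite_of_injective_forall_mem hWinj (fun i => ⟨hWmem i, hWval i⟩))
  -- pigeonhole
  set p : Fin (C + 1) → ℕ := fun j => u₁.length + 1 + (j : ℕ) with hp
  set F : Fin (C + 1) → σ × (Fin k → Option A) :=
    fun j => (M.evalFrom M.start (u₂.take (p j)), fun i => (V (p j))[(i : ℕ)]?) with hF
  have hcard : Fintype.card (σ × (Fin k → Option A)) < Fintype.card (Fin (C + 1)) := by
    simp [hC]
  obtain ⟨j, j', hne, hFeq⟩ := Fintype.exists_ne_map_eq_of_card_lt F hcard
  have hple : ∀ j : Fin (C + 1), p j ≤ u₂.length := by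
    intro j
    have := j.isLt
    simp only [hp]
    omega
  have hVeq' : ∀ (j j' : Fin (C + 1)), F j = F j' → V (p j) = V (p j') := by
    intro j j' hfe
    apply List.ext_getElem?
    intro i
    by_cases hi : i < k
    · exact congrFun (congrArg Prod.snd hfe) ⟨i, hi⟩
    · push_neg at hi
      rw [List.getElem?_eq_none (le_trans (hVlen (p j) (by simp [hp])) hi),
        List.getElem?_eq_none (le_trans (hVlen (p j') (by simp [hp])) hi)]
  have hstate' : ∀ (j j' : Fin (C + 1)), F j = F j' →
      M.evalFrom M.start (u₂.take (p j)) = M.evalFrom M.start (u₂.take (p j')) :=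
    fun j j' hfe => congrArg Prod.fst hfe
  have hvne : (j : ℕ) ≠ (j' : ℕ) := fun h => hne (Fin.ext h)
  rcases hvne.lt_or_gt with h | h
  · exact main (p j) (p j') (by simp [hp]) (by simp only [hp]; omega) (hple j')
      (hstate' j j' hFeq) (hVeq' j j' hFeq)
  · exact main (p j') (p j) (by simp [hp]) (by simp only [hp]; omega) (hple j)
      (hstate' j' j hFeq.symm) (hVeq' j' j hFeq.symm)

/-- Theorem 5, "if" direction: if `π : L → G` is finite-to-one and onto, `L` is regular, and
the two-sided fellow traveller property holds for some constant `k`, then `(A, L)` is a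
biautomatic structure. -/
theorem biautomatic_of_two_sided_fellow_traveller {A G : Type*} [Fintype A] [Group G]
    (φ : A → G) (ι : A → A)
    (hgen : Subsemigroup.closure (Set.range φ) = ⊤)
    (hι : ∀ a : A, φ (ι a) = (φ a)⁻¹)
    (L : Language A) (hreg : L.IsRegular)
    (honto : ∀ g : G, ∃ w ∈ L, evalWord φ w = g)
    (hfin : ∀ g : G, {w : List A | w ∈ L ∧ evalWord φ w = g}.Finite)
    (k : ℕ)
    (hk : ∀ w₁ ∈ L, ∀ w₂ ∈ L, ∀ a b : Option A,
      evalWord φ (a.toList ++ w₁ ++ b.toList) = evalWord φ w₂ →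
        unifDist φ (a.toList ++ w₁ ++ b.toList) w₂ ≤ k) :
    IsBiautomaticStructure φ ι L := by
  classical
  have hrep : ∀ g : G, ∃ u : List A, evalWord φ u = g := by
    intro g; obtain ⟨w, -, hw⟩ := honto g; exact ⟨w, hw⟩
  obtain ⟨N, hNpos, hN⟩ := length_bound φ hrep L hreg hfin k hk
  constructor
  · exact ⟨hreg, honto, k, fun w₁ h₁ w₂ h₂ b hb => hk w₁ h₁ w₂ h₂ none b hb⟩
  · refine ⟨isRegular_wordInv_image ι hreg, ?_, ?_⟩
    · intro g
      obtain ⟨w, hw, hwv⟩ := honto g⁻¹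
      exact ⟨wordInv ι w, ⟨w, hw, rfl⟩, by rw [evalWord_wordInv φ ι hι, hwv, inv_inv]⟩
    · refine ⟨k + N + 1, ?_⟩
      rintro w₁' hw₁ w₂' hw₂ c H
      obtain ⟨u₁, hu₁, rfl⟩ := hw₁
      obtain ⟨u₂, hu₂, rfl⟩ := hw₂
      set a : Option A := c.map ι with hadef
      have hac : evalWord φ a.toList = (evalWord φ c.toList)⁻¹ := by
        cases c <;> simp [hadef, evalWord, hι]
      have e1 : evalWord φ u₂ = (evalWord φ c.toList)⁻¹ * evalWord φ u₁ := by
        have h := H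
        rw [evalWord_append] at h
        simp only [evalWord_wordInv φ ι hι] at h
        rw [← inv_inv (evalWord φ u₂), ← h]
        group
      have keyeq : evalWord φ (a.toList ++ u₁) = evalWord φ u₂ := by
        rw [evalWord_append, hac, e1]
      have hft : ∀ m, wordDist φ (evalWord φ ((a.toList ++ u₁).take m))
          (evalWord φ (u₂.take m)) ≤ k := by
        intro m
        have h := hk u₁ hu₁ u₂ hu₂ a none
          (by rw [show (none : Option A).toList = [] from rfl, List.append_nil]; exact keyeq)
        rw [show (none : Option A).toList = [] from rfl, List.append_nil] at h
        exact le_trans (le_unifDist φ _ _ m) h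
      have h21 : u₂.length ≤ u₁.length + N := hN u₁ hu₁ u₂ hu₂ a keyeq
      have h12 : u₁.length ≤ u₂.length + N :=
        hN u₂ hu₂ u₁ hu₁ c (by rw [evalWord_append, e1]; group)
      apply unifDist_le
      intro n
      set m₂ := u₂.length - n with hm₂
      have hh : evalWord φ ((wordInv ι u₂).take n) = (evalWord φ (u₂.drop m₂))⁻¹ :=
        eval_wordInv_take φ ι hι u₂ n
      have hlenc : (c.toList).length ≤ 1 := by cases c <;> simp
      have hlena : (a.toList).length ≤ 1 := by cases c <;> simp [hadef]
      have hlw₁ : (wordInv ι u₁).length = u₁.length := by simp [wordInv]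
      have dB : evalWord φ (u₂.drop m₂) = (evalWord φ (u₂.take m₂))⁻¹ * evalWord φ u₂ := by
        rw [evalWord_take_drop φ u₂ m₂, inv_mul_cancel_left]
      by_cases hn : n ≤ u₁.length
      · set m₁ := u₁.length - n with hm₁
        set m := a.toList.length + m₁ with hm
        have hg : evalWord φ ((wordInv ι u₁ ++ c.toList).take n)
            = (evalWord φ (u₁.drop m₁))⁻¹ := by
          rw [List.take_append_of_le_length (by rw [hlw₁]; exact hn),
            eval_wordInv_take φ ι hι]
        obtain ⟨v, hvlen, hv⟩ := wordDist_exists φ hrep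
          (evalWord φ ((a.toList ++ u₁).take m)) (evalWord φ (u₂.take m))
        have hvlen' : v.length ≤ k := by rw [hvlen]; exact hft m
        have htakem : (a.toList ++ u₁).take m = a.toList ++ u₁.take m₁ := by
          rw [hm]; exact List.take_length_add_append m₁
        rw [htakem, evalWord_append, hac] at hv
        set d : List A := if m ≤ m₂ then (u₂.take m₂).drop m
          else wordInv ι ((u₂.take m).drop m₂) with hd
        have hdval : evalWord φ d = (evalWord φ (u₂.take m))⁻¹ * evalWord φ (u₂.take m₂) := by
          rw [hd]; split_ifs with hc
          · have h := evalWord_take_drop φ (u₂.take m₂) m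
            rw [List.take_take, min_eq_left hc] at h
            rw [h, inv_mul_cancel_left]
          · push_neg at hc
            rw [evalWord_wordInv φ ι hι]
            have h := evalWord_take_drop φ (u₂.take m) m₂
            rw [List.take_take, min_eq_left hc.le] at h
            rw [h]
            group
        have hdlen : d.length ≤ N + 1 := by
          rw [hd]; split_ifs
          · simp only [List.length_drop, List.length_take]
            omega
          · simp only [wordInv, List.length_map, List.length_reverse, List.length_drop,
              List.length_take]
            omega
        refine le_trans (wordDist_le φ _ _ (v ++ d) ?_) ?_
        · rw [evalWord_append, hv, hdval, hg, hh]
          have dA : evalWord φ (u₁.drop m₁) = (evalWord φ (u₁.take m₁))⁻¹ * evalWord φ u₁ := by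
            rw [evalWord_take_drop φ u₁ m₁, inv_mul_cancel_left]
          rw [dA, dB, e1]
          group
        · simp only [List.length_append]
          omega
      · push_neg at hn
        have hg : evalWord φ ((wordInv ι u₁ ++ c.toList).take n) = (evalWord φ u₂)⁻¹ := by
          rw [List.take_of_length_le (by
            simp only [List.length_append, hlw₁]
            omega), H, evalWord_wordInv φ ι hι]
        refine le_trans (wordDist_le φ _ _ (u₂.take m₂) ?_) ?_
        · rw [hg, hh, inv_inv, dB]
          group
        · simp only [List.length_take]
          omega
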